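/- Let R be an algebra (possibly without identity) over a field F, let σ be an automorphism of R, and let D be a σ-derivation on R. Let R* = R ⊕ F be the Dorroh extension of R over F, with multiplication (r₁,m₁)(r₂,m₂) = (r₁r₂ + m₂r₁ + m₁r₂, m₁m₂), and define σ*((r,m)) = (σ(r), m) and D*((r,m)) = (D(r), 0). Then σ* is an automorphism of R*, D* is a σ*-derivation on R*, and J(R*[x;σ*,D*]) = J(R[x;σ,D]). -/

import Mathlib

/-- `S` is (a copy of) the skew polynomial ring `R[x;σ,D]` as a set of polynomials:
`ι : R → S` is the inclusion of coefficients, `X ∈ S` is the variable, every element of `S` is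
uniquely a polynomial `Σᵢ ι(aᵢ) * Xⁱ`, and multiplication is governed by
`X * a = σ(a) * X + D(a)`. (No axioms on `σ` and `D` themselves are imposed here.) -/
structure IsOreExtensionCarrier {R S : Type*} [Ring R] [Ring S]
    (σ : R → R) (D : R → R) (ι : R → S) (X : S) : Prop where
  ι_add : ∀ a b : R, ι (a + b) = ι a + ι b
  ι_mul : ∀ a b : R, ι (a * b) = ι a * ι b
  ι_one : ι 1 = 1
  X_comm : ∀ a : R, X * ι a = ι (σ a) * X + ι (D a)
  repr : ∀ s : S, ∃ c : ℕ →₀ R, s = c.sum fun i a => ι a * X ^ i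
  uniq : ∀ c : ℕ →₀ R, (c.sum fun i a => ι a * X ^ i) = 0 → c = 0

/-- The Jacobson radical of a (possibly non-unital) subring `T` of `S`: the union of all
quasi-regular two-sided ideals of `T` (quasi-inverses taken inside `T`). -/
def nuJacobsonIn {S : Type*} [Ring S] (T : Set S) : Set S :=
  ⋃₀ {I : Set S | I ⊆ T ∧ 0 ∈ I ∧ (∀ x ∈ I, ∀ y ∈ I, x + y ∈ I) ∧ (∀ x ∈ I, -x ∈ I) ∧
      (∀ x ∈ I, ∀ t ∈ T, t * x ∈ I ∧ x * t ∈ I) ∧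
      ∀ x ∈ I, ∃ y ∈ T, x + y + x * y = 0 ∧ x + y + y * x = 0}

set_option linter.unusedSectionVars false

namespace DorrohAux

variable {A : Type*} [Ring A]

theorem left_inv_of_mem_jacobson {x : A} (hx : x ∈ Ideal.jacobson (⊥ : Ideal A)) :
    ∃ z : A, z * (1 + x) = 1 := by
  obtain ⟨z, hz⟩ := Ideal.mem_jacobson_iff.mp hx 1
  rw [Ideal.mem_bot] at hz
  refine ⟨z, sub_eq_zero.mp ?_⟩
  have h : z * (1 + x) - 1 = z * 1 * x + z - 1 := by noncomm_ring
  exact h.trans hz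

/-- Lemma A: elements of the Jacobson radical are quasi-regular with two-sided inverse. -/
theorem two_sided_inv_of_mem_jacobson {x : A} (hx : x ∈ Ideal.jacobson (⊥ : Ideal A)) :
    ∃ u : A, u * (1 + x) = 1 ∧ (1 + x) * u = 1 := by
  obtain ⟨z, hz⟩ := left_inv_of_mem_jacobson hx
  have hzx : -(z * x) ∈ Ideal.jacobson (⊥ : Ideal A) :=
    neg_mem (Ideal.mul_mem_left _ z hx)
  obtain ⟨w, hw⟩ := left_inv_of_mem_jacobson hzx
  have hz' : 1 + -(z * x) = z := by
    have : z * (1 + x) = z + z * x := by noncomm_ring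
    rw [this] at hz
    rw [← hz]; abel
  rw [hz'] at hw
  refine ⟨z, hz, ?_⟩
  have : w = 1 + x := by
    calc w = w * (z * (1 + x)) := by rw [hz, mul_one]
    _ = (w * z) * (1 + x) := by rw [mul_assoc]
    _ = 1 + x := by rw [hw, one_mul]
  rw [← this, hw]

/-- Lemma C: swap trick for quasi-inverses. -/
theorem swap_inv (a b u : A) (h1 : (1 + a * b) * u = 1) (h2 : u * (1 + a * b) = 1) :
    (1 - b * u * a) * (1 + b * a) = 1 ∧ (1 + b * a) * (1 - b * u * a) = 1 := by
  constructor
  · have h : (1 - b * u * a) * (1 + b * a) = 1 + b * a - b * (u * (1 + a * b)) * a := by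
      noncomm_ring
    rw [h, h2]; noncomm_ring
  · have h : (1 + b * a) * (1 - b * u * a) = 1 + b * a - b * ((1 + a * b) * u) * a := by
      noncomm_ring
    rw [h, h1]; noncomm_ring

/-- Lemma B: the Jacobson radical is closed under right multiplication. -/
theorem mul_mem_jacobson_bot_right {x : A} (s : A)
    (hx : x ∈ Ideal.jacobson (⊥ : Ideal A)) : x * s ∈ Ideal.jacobson (⊥ : Ideal A) := by
  rw [Ideal.mem_jacobson_iff]
  intro y
  have hsa : s * (y * x) ∈ Ideal.jacobson (⊥ : Ideal A) :=
    Ideal.mul_mem_left _ s (Ideal.mul_mem_left _ y hx)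
  obtain ⟨u, hu1, hu2⟩ := two_sided_inv_of_mem_jacobson hsa
  obtain ⟨e1, _⟩ := swap_inv s (y * x) u hu2 hu1
  refine ⟨1 - y * x * u * s, ?_⟩
  rw [Ideal.mem_bot]
  have h : (1 - y * x * u * s) * y * (x * s) + (1 - y * x * u * s) - 1
      = (1 - y * x * u * s) * (1 + y * x * s) - 1 := by noncomm_ring
  rw [h]
  rw [e1, sub_self]

end DorrohAux

namespace DorrohAux

open Polynomial Unitization Finsupp

variable {F R : Type*} [Field F] [NonUnitalRing R] [Module F R]
  [SMulCommClass F R R] [IsScalarTower F R R]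

/-- The "scalar part" polynomial of a finitely supported coefficient function. -/
noncomputable def toPoly (c : ℕ →₀ Unitization F R) : Polynomial F :=
  c.sum fun i a => Polynomial.monomial i a.fst

theorem coeff_toPoly (c : ℕ →₀ Unitization F R) (k : ℕ) :
    (toPoly c).coeff k = (c k).fst := by
  classical
  rw [toPoly, Finsupp.sum, Polynomial.finset_sum_coeff]
  simp only [Polynomial.coeff_monomial]
  rw [Finset.sum_ite_eq' c.support k fun i => (c i).fst]
  split
  · rfl
  · rw [Finsupp.notMem_support_iff.mp ‹_›, Unitization.fst_zero]

theorem toPoly_single (i : ℕ) (a : Unitization F R) :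
    toPoly (Finsupp.single i a) = Polynomial.monomial i a.fst := by
  rw [toPoly, Finsupp.sum_single_index]
  simp

theorem toPoly_add (c d : ℕ →₀ Unitization F R) :
    toPoly (c + d) = toPoly c + toPoly d := by
  ext k
  simp [coeff_toPoly]

theorem toPoly_zero : toPoly (0 : ℕ →₀ Unitization F R) = 0 := by
  ext k; simp [coeff_toPoly]

theorem toPoly_eq_zero_iff (c : ℕ →₀ Unitization F R) :
    toPoly c = 0 ↔ ∀ k, (c k).fst = 0 := by
  constructor
  · intro h k
    rw [← coeff_toPoly, h, Polynomial.coeff_zero]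
  · intro h
    ext k
    rw [coeff_toPoly, h, Polynomial.coeff_zero]

theorem toPoly_mapRange_mul (a : Unitization F R) (c : ℕ →₀ Unitization F R) :
    toPoly (c.mapRange (a * ·) (mul_zero a)) = Polynomial.C a.fst * toPoly c := by
  ext k
  simp [coeff_toPoly, Finsupp.mapRange_apply, Unitization.fst_mul]

theorem toPoly_mapDomain (j : ℕ) (c : ℕ →₀ Unitization F R) :
    toPoly (c.mapDomain (· + j)) = toPoly c * Polynomial.X ^ j := by
  induction c using Finsupp.induction with
  | zero => simp [toPoly_zero]
  | single_add i a f hif ha ih =>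
    rw [Finsupp.mapDomain_add, toPoly_add, toPoly_add, Finsupp.mapDomain_single,
      toPoly_single, toPoly_single, ih, add_mul]
    congr 1
    rw [X_pow_eq_monomial, monomial_mul_monomial, mul_one]

end DorrohAux

set_option linter.unusedSectionVars false



namespace DorrohAux

open Polynomial Finsupp

section PhiGeneral

variable {B S : Type*} [Ring B] [Ring S]
variable {σs Ds : B → B} {ι : B → S} {X : S}

/-- The representation map from coefficient functions to `S`. -/
def Phi (ι : B → S) (X : S) (c : ℕ →₀ B) : S := c.sum fun i a => ι a * X ^ i

variable (hOre : IsOreExtensionCarrier σs Ds ι X)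
include hOre

theorem ι_zero : ι 0 = 0 := by
  have := hOre.ι_add 0 0
  rw [add_zero] at this
  exact right_eq_add.mp this

theorem Phi_single (i : ℕ) (a : B) : Phi ι X (Finsupp.single i a) = ι a * X ^ i := by
  rw [Phi, Finsupp.sum_single_index]
  rw [ι_zero hOre, zero_mul]

theorem Phi_zero : Phi ι X (0 : ℕ →₀ B) = 0 := by
  rw [Phi, Finsupp.sum_zero_index]

theorem Phi_add (c d : ℕ →₀ B) : Phi ι X (c + d) = Phi ι X c + Phi ι X d := by
  rw [Phi, Phi, Phi, Finsupp.sum_add_index']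
  · intro i; rw [ι_zero hOre, zero_mul]
  · intro i b₁ b₂; rw [hOre.ι_add, add_mul]

theorem Phi_injective : Function.Injective (Phi ι X) := by
  intro c d h
  have h2 : Phi ι X (c - d) + Phi ι X d = Phi ι X c := by
    rw [← Phi_add hOre, sub_add_cancel]
  have h3 : Phi ι X (c - d) = 0 := by
    rw [h] at h2
    have h4 : Phi ι X (c - d) + Phi ι X d = 0 + Phi ι X d := by rw [zero_add]; exact h2
    exact add_right_cancel h4
  have := hOre.uniq (c - d) h3
  exact sub_eq_zero.mp this

theorem mul_Phi (a : B) (c : ℕ →₀ B) :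
    ι a * Phi ι X c = Phi ι X (c.mapRange (a * ·) (mul_zero a)) := by
  rw [Phi, Phi, Finsupp.mul_sum, Finsupp.sum_mapRange_index]
  · apply Finsupp.sum_congr
    intro i _
    rw [← mul_assoc, ← hOre.ι_mul]
  · intro i; rw [ι_zero hOre, zero_mul]

theorem Phi_mul_X_pow (j : ℕ) (c : ℕ →₀ B) :
    Phi ι X c * X ^ j = Phi ι X (c.mapDomain (· + j)) := by
  rw [Phi, Phi, Finsupp.sum_mul, Finsupp.sum_mapDomain_index]
  · apply Finsupp.sum_congr
    intro i _
    rw [mul_assoc, pow_add]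
  · intro i; rw [ι_zero hOre, zero_mul]
  · intro i b₁ b₂; rw [hOre.ι_add, add_mul]

theorem X_mul_Phi (hσ0 : σs 0 = 0) (hD0 : Ds 0 = 0) (c : ℕ →₀ B) :
    X * Phi ι X c =
      Phi ι X ((c.mapRange σs hσ0).mapDomain (· + 1) + c.mapRange Ds hD0) := by
  rw [Phi, Finsupp.mul_sum]
  rw [Phi_add hOre]
  have h1 : Phi ι X ((c.mapRange σs hσ0).mapDomain (· + 1))
      = c.sum fun i b => ι (σs b) * X ^ (i + 1) := by
    rw [Phi, Finsupp.sum_mapDomain_index, Finsupp.sum_mapRange_index]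
    · intro i; rw [ι_zero hOre, zero_mul]
    · intro i; rw [ι_zero hOre, zero_mul]
    · intro i b₁ b₂; rw [hOre.ι_add, add_mul]
  have h2 : Phi ι X (c.mapRange Ds hD0) = c.sum fun i b => ι (Ds b) * X ^ i := by
    rw [Phi, Finsupp.sum_mapRange_index]
    intro i; rw [ι_zero hOre, zero_mul]
  rw [h1, h2, ← Finsupp.sum_add]
  apply Finsupp.sum_congr
  intro i _
  rw [← mul_assoc, hOre.X_comm, add_mul, mul_assoc, ← pow_succ']

end PhiGeneral

end DorrohAux

namespace DorrohAux

open Polynomial Finsupp Unitization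

section Specialized

variable {F R S : Type*} [Field F] [NonUnitalRing R] [Module F R]
  [SMulCommClass F R R] [IsScalarTower F R R] [Ring S]
variable {σs Ds : Unitization F R → Unitization F R} {ι : Unitization F R → S} {X : S}

theorem toPoly_mapRange_sigma (hσ0 : σs 0 = 0) (hfσ : ∀ u, (σs u).fst = u.fst)
    (c : ℕ →₀ Unitization F R) : toPoly (c.mapRange σs hσ0) = toPoly c := by
  ext k
  simp [coeff_toPoly, Finsupp.mapRange_apply, hfσ]

theorem toPoly_mapRange_D (hD0 : Ds 0 = 0) (hfD : ∀ u, (Ds u).fst = 0)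
    (c : ℕ →₀ Unitization F R) : toPoly (c.mapRange Ds hD0) = 0 := by
  ext k
  simp [coeff_toPoly, Finsupp.mapRange_apply, hfD]

variable (hOre : IsOreExtensionCarrier σs Ds ι X)
  (hσ0 : σs 0 = 0) (hD0 : Ds 0 = 0)
  (hfσ : ∀ u, (σs u).fst = u.fst) (hfD : ∀ u, (Ds u).fst = 0)
include hOre hσ0 hD0 hfσ hfD

theorem X_pow_mul_ι (i : ℕ) (b : Unitization F R) :
    ∃ c : ℕ →₀ Unitization F R,
      X ^ i * ι b = Phi ι X c ∧ toPoly c = Polynomial.monomial i b.fst := by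
  induction i with
  | zero =>
    refine ⟨Finsupp.single 0 b, ?_, toPoly_single 0 b⟩
    rw [pow_zero, one_mul, Phi_single hOre, pow_zero, mul_one]
  | succ i ih =>
    obtain ⟨c, hc, hc2⟩ := ih
    refine ⟨(c.mapRange σs hσ0).mapDomain (· + 1) + c.mapRange Ds hD0, ?_, ?_⟩
    · rw [pow_succ', mul_assoc, hc, X_mul_Phi hOre hσ0 hD0]
    · rw [toPoly_add, toPoly_mapDomain, toPoly_mapRange_sigma hσ0 hfσ,
        toPoly_mapRange_D hD0 hfD, hc2, add_zero, pow_one, monomial_mul_X]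

theorem single_prod_repr (i j : ℕ) (a b : Unitization F R) :
    ∃ c : ℕ →₀ Unitization F R,
      (ι a * X ^ i) * (ι b * X ^ j) = Phi ι X c ∧
        toPoly c = Polynomial.monomial i a.fst * Polynomial.monomial j b.fst := by
  obtain ⟨c₀, hc₀, hc₀2⟩ := X_pow_mul_ι hOre hσ0 hD0 hfσ hfD i b
  refine ⟨((c₀.mapRange (a * ·) (mul_zero a)).mapDomain (· + j)), ?_, ?_⟩
  · calc (ι a * X ^ i) * (ι b * X ^ j) = (ι a * (X ^ i * ι b)) * X ^ j := by
          rw [mul_assoc, mul_assoc, mul_assoc]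
    _ = (ι a * Phi ι X c₀) * X ^ j := by rw [hc₀]
    _ = Phi ι X (c₀.mapRange (a * ·) (mul_zero a)) * X ^ j := by rw [mul_Phi hOre]
    _ = _ := by rw [Phi_mul_X_pow hOre]
  · rw [toPoly_mapDomain, toPoly_mapRange_mul, hc₀2, monomial_mul_monomial,
      X_pow_eq_monomial, C_mul_monomial, monomial_mul_monomial, mul_one]

theorem single_mul_Phi_repr (i : ℕ) (a : Unitization F R) (d : ℕ →₀ Unitization F R) :
    ∃ e : ℕ →₀ Unitization F R,
      (ι a * X ^ i) * Phi ι X d = Phi ι X e ∧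
        toPoly e = Polynomial.monomial i a.fst * toPoly d := by
  induction d using Finsupp.induction with
  | zero => exact ⟨0, by rw [Phi_zero hOre, mul_zero], by
      rw [toPoly_zero, mul_zero]⟩
  | single_add j b f hjf hb ih =>
    obtain ⟨e₁, he₁, he₁2⟩ := single_prod_repr hOre hσ0 hD0 hfσ hfD i j a b
    obtain ⟨e₂, he₂, he₂2⟩ := ih
    refine ⟨e₁ + e₂, ?_, ?_⟩
    · rw [Phi_add hOre, mul_add, Phi_add hOre, Phi_single hOre, he₁, he₂]
    · rw [toPoly_add, toPoly_add, toPoly_single, mul_add, he₁2, he₂2]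

theorem mul_repr (c d : ℕ →₀ Unitization F R) :
    ∃ e : ℕ →₀ Unitization F R,
      Phi ι X c * Phi ι X d = Phi ι X e ∧ toPoly e = toPoly c * toPoly d := by
  induction c using Finsupp.induction with
  | zero => exact ⟨0, by rw [Phi_zero hOre, zero_mul], by
      rw [toPoly_zero, zero_mul]⟩
  | single_add i a f hif ha ih =>
    obtain ⟨e₁, he₁, he₁2⟩ := single_mul_Phi_repr hOre hσ0 hD0 hfσ hfD i a d
    obtain ⟨e₂, he₂, he₂2⟩ := ih
    refine ⟨e₁ + e₂, ?_, ?_⟩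
    · rw [Phi_add hOre, add_mul, Phi_add hOre, Phi_single hOre, he₁, he₂]
    · rw [toPoly_add, toPoly_add, toPoly_single, add_mul, he₁2, he₂2]

end Specialized

end DorrohAux

namespace DorrohAux

open Polynomial Finsupp Unitization

section PhiHom

variable {F R S : Type*} [Field F] [NonUnitalRing R] [Module F R]
  [SMulCommClass F R R] [IsScalarTower F R R] [Ring S]
variable {σs Ds : Unitization F R → Unitization F R} {ι : Unitization F R → S} {X : S}

/-- The scalar-part polynomial of an element of the Ore extension. -/
noncomputable def phi (hOre : IsOreExtensionCarrier σs Ds ι X) (s : S) : Polynomial F :=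
  toPoly (hOre.repr s).choose

variable (hOre : IsOreExtensionCarrier σs Ds ι X)

theorem phi_eq {s : S} {c : ℕ →₀ Unitization F R} (hc : s = Phi ι X c) :
    phi hOre s = toPoly c := by
  have h : s = Phi ι X (hOre.repr s).choose := (hOre.repr s).choose_spec
  rw [phi, Phi_injective hOre (h.symm.trans hc)]

variable (hσ0 : σs 0 = 0) (hD0 : Ds 0 = 0)
  (hfσ : ∀ u, (σs u).fst = u.fst) (hfD : ∀ u, (Ds u).fst = 0)

include hOre hσ0 hD0 hfσ hfD

theorem phi_add' (s t : S) : phi hOre (s + t) = phi hOre s + phi hOre t := by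
  obtain ⟨c, hc⟩ := hOre.repr s
  obtain ⟨d, hd⟩ := hOre.repr t
  have hc' : s = Phi ι X c := hc
  have hd' : t = Phi ι X d := hd
  rw [phi_eq hOre hc', phi_eq hOre hd', ← toPoly_add]
  exact phi_eq hOre (by rw [hc', hd', Phi_add hOre])

theorem phi_mul' (s t : S) : phi hOre (s * t) = phi hOre s * phi hOre t := by
  obtain ⟨c, hc⟩ := hOre.repr s
  obtain ⟨d, hd⟩ := hOre.repr t
  have hc' : s = Phi ι X c := hc
  have hd' : t = Phi ι X d := hd
  obtain ⟨e, he, he2⟩ := mul_repr hOre hσ0 hD0 hfσ hfD c d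
  rw [phi_eq hOre hc', phi_eq hOre hd', ← he2]
  exact phi_eq hOre (by rw [hc', hd', he])

theorem phi_one' : phi hOre (1 : S) = 1 := by
  have h1 : (1 : S) = Phi ι X (Finsupp.single 0 1) := by
    rw [Phi_single hOre, pow_zero, mul_one, hOre.ι_one]
  rw [phi_eq hOre h1, toPoly_single, Unitization.fst_one, monomial_zero_one]

theorem phi_zero' : phi hOre (0 : S) = 0 := by
  rw [phi_eq hOre (Phi_zero hOre).symm, toPoly_zero]

/-- `phi` bundled as a ring homomorphism. -/
noncomputable def phiHom : S →+* Polynomial F where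
  toFun := phi hOre
  map_one' := phi_one' hOre hσ0 hD0 hfσ hfD
  map_mul' := phi_mul' hOre hσ0 hD0 hfσ hfD
  map_zero' := phi_zero' hOre hσ0 hD0 hfσ hfD
  map_add' := phi_add' hOre hσ0 hD0 hfσ hfD

theorem phi_surjective : Function.Surjective (phi hOre) := by
  intro p
  refine ⟨Phi ι X (p.toFinsupp.coeff.mapRange (Unitization.inl : F → Unitization F R)
    (by rw [Unitization.inl_zero])), ?_⟩
  rw [phi_eq hOre rfl]
  ext k
  rw [coeff_toPoly, Finsupp.mapRange_apply, Unitization.fst_inl]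
  rfl

theorem mem_T_iff (s : S) :
    (∃ c : ℕ →₀ R, s = c.sum fun i a => ι (Unitization.inr a) * X ^ i) ↔
      phi hOre s = 0 := by
  constructor
  · rintro ⟨c, rfl⟩
    have h : (c.sum fun i a => ι (Unitization.inr a) * X ^ i)
        = Phi ι X (c.mapRange (Unitization.inr : R → Unitization F R)
          (Unitization.inr_zero F)) := by
      rw [Phi, Finsupp.sum_mapRange_index]
      intro i; rw [ι_zero hOre, zero_mul]
    rw [phi_eq hOre h]
    ext k
    rw [coeff_toPoly, Finsupp.mapRange_apply, Unitization.fst_inr, Polynomial.coeff_zero]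
  · intro h
    obtain ⟨c, hc⟩ := hOre.repr s
    have hc' : s = Phi ι X c := hc
    rw [phi_eq hOre hc'] at h
    rw [toPoly_eq_zero_iff] at h
    refine ⟨c.mapRange (fun u : Unitization F R => u.snd) Unitization.snd_zero, ?_⟩
    rw [hc', Phi, Finsupp.sum_mapRange_index]
    · apply Finsupp.sum_congr
      intro i _
      congr 1
      apply congrArg
      exact (Unitization.ext ((h i).symm ▸ (Unitization.fst_inr F (c i).snd).symm)
        (Unitization.snd_inr F (c i).snd)).symm
    · intro i
      rw [Unitization.inr_zero, ι_zero hOre, zero_mul]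

end PhiHom

end DorrohAux


/-- Let `R` be a (possibly non-unital) algebra over a field `F`, `σ` an automorphism of `R` and
`D` a `σ`-derivation. Let `R* = R ⊕ F` be the Dorroh extension (`Unitization F R`, with
multiplication `(r₁,m₁)(r₂,m₂) = (r₁r₂ + m₂r₁ + m₁r₂, m₁m₂)`), and define
`σ*((r,m)) = (σ(r),m)` and `D*((r,m)) = (D(r),0)`. Then `σ*` is an automorphism of `R*`, `D*`
is a `σ*`-derivation on `R*`, and `J(R*[x;σ*,D*]) = J(R[x;σ,D])`, where `R[x;σ,D]` is the
non-unital subring of `R*[x;σ*,D*]` of polynomials with all coefficients in `R`. -/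
theorem dorroh_extension_jacobson_eq {F R S : Type*} [Field F] [NonUnitalRing R]
    [Module F R] [SMulCommClass F R R] [IsScalarTower F R R] [Ring S]
    (σ D : R → R)
    (hσadd : ∀ a b : R, σ (a + b) = σ a + σ b)
    (hσmul : ∀ a b : R, σ (a * b) = σ a * σ b)
    (hσsmul : ∀ (c : F) (a : R), σ (c • a) = c • σ a)
    (hσbij : Function.Bijective σ)
    (hDadd : ∀ a b : R, D (a + b) = D a + D b)
    (hDmul : ∀ a b : R, D (a * b) = σ a * D b + D a * b)
    (hDsmul : ∀ (c : F) (a : R), D (c • a) = c • D a)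
    (σs Ds : Unitization F R → Unitization F R)
    (hσs : ∀ x : Unitization F R, σs x = Unitization.inl x.fst + Unitization.inr (σ x.snd))
    (hDs : ∀ x : Unitization F R, Ds x = Unitization.inr (D x.snd))
    (ι : Unitization F R → S) (X : S)
    (hOre : IsOreExtensionCarrier σs Ds ι X) :
    (Function.Bijective σs ∧ σs 1 = 1 ∧
        (∀ x y : Unitization F R, σs (x + y) = σs x + σs y) ∧
        (∀ x y : Unitization F R, σs (x * y) = σs x * σs y)) ∧
      ((∀ x y : Unitization F R, Ds (x + y) = Ds x + Ds y) ∧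
        (∀ x y : Unitization F R, Ds (x * y) = σs x * Ds y + Ds x * y)) ∧
      ((⊥ : Ideal S).jacobson : Set S) =
        nuJacobsonIn {s : S | ∃ c : ℕ →₀ R,
          s = c.sum fun i a => ι (Unitization.inr a) * X ^ i} := by
  classical
  -- basic facts about σ and D
  have hσ0 : σ 0 = 0 := by
    have := hσadd 0 0; rw [add_zero] at this; exact (right_eq_add.mp this)
  have hD0 : D 0 = 0 := by
    have := hDadd 0 0; rw [add_zero] at this; exact (right_eq_add.mp this)
  have hfσ : ∀ u : Unitization F R, (σs u).fst = u.fst := by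
    intro u; rw [hσs]; simp
  have hsσ : ∀ u : Unitization F R, (σs u).snd = σ u.snd := by
    intro u; rw [hσs]; simp
  have hfD : ∀ u : Unitization F R, (Ds u).fst = 0 := by
    intro u; rw [hDs]; simp
  have hsD : ∀ u : Unitization F R, (Ds u).snd = D u.snd := by
    intro u; rw [hDs]; simp
  have hσs0 : σs 0 = 0 := by rw [hσs]; simp [hσ0]
  have hDs0 : Ds 0 = 0 := by rw [hDs]; simp [hD0]
  -- Part 1 : σs is a ring automorphism
  have part1 : Function.Bijective σs ∧ σs 1 = 1 ∧
      (∀ x y : Unitization F R, σs (x + y) = σs x + σs y) ∧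
      (∀ x y : Unitization F R, σs (x * y) = σs x * σs y) := by
    refine ⟨⟨?_, ?_⟩, ?_, ?_, ?_⟩
    · intro x y h
      refine Unitization.ext ?_ ?_
      · rw [← hfσ x, h, hfσ]
      · refine hσbij.1 ?_
        rw [← hsσ x, h, hsσ]
    · intro y
      obtain ⟨r, hr⟩ := hσbij.2 y.snd
      refine ⟨Unitization.inl y.fst + Unitization.inr r, ?_⟩
      rw [hσs]
      refine Unitization.ext ?_ ?_ <;> simp [hr]
    · refine Unitization.ext ?_ ?_
      · rw [hfσ]
      · rw [hsσ]; simp [hσ0]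
    · intro x y
      refine Unitization.ext ?_ ?_
      · rw [hfσ]; simp [hfσ]
      · rw [hsσ]; simp [hsσ, Unitization.snd_add, hσadd]
    · intro x y
      refine Unitization.ext ?_ ?_
      · simp [hfσ, Unitization.fst_mul]
      · simp [hsσ, hfσ, Unitization.snd_mul, hσadd, hσmul, hσsmul]
  -- Part 2 : Ds is a σs-derivation
  have part2 : (∀ x y : Unitization F R, Ds (x + y) = Ds x + Ds y) ∧
      (∀ x y : Unitization F R, Ds (x * y) = σs x * Ds y + Ds x * y) := by
    constructor
    · intro x y
      refine Unitization.ext ?_ ?_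
      · simp [hfD]
      · simp [hsD, Unitization.snd_add, hDadd]
    · intro x y
      refine Unitization.ext ?_ ?_
      · simp [hfD, hfσ, Unitization.fst_mul, Unitization.fst_add]
      · simp only [hsD, hfD, hsσ, hfσ, Unitization.snd_mul, Unitization.snd_add,
          Unitization.fst_mul, Unitization.fst_add]
        rw [hDadd, hDadd, hDsmul, hDsmul, hDmul]
        simp [zero_smul]
        abel
  refine ⟨part1, part2, ?_⟩
  -- Part 3 : the Jacobson radicals agree
  set T : Set S := {s : S | ∃ c : ℕ →₀ R,
      s = c.sum fun i a => ι (Unitization.inr a) * X ^ i} with hT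
  set φ : S →+* Polynomial F := DorrohAux.phiHom hOre hσs0 hDs0 hfσ hfD with hφ
  have hφs : ∀ s : S, φ s = DorrohAux.phi hOre s := fun s => rfl
  have hker : ∀ s : S, s ∈ T ↔ φ s = 0 := by
    intro s
    rw [hφs]
    exact DorrohAux.mem_T_iff hOre hσs0 hDs0 hfσ hfD s
  have hsurj : Function.Surjective φ := DorrohAux.phi_surjective hOre hσs0 hDs0 hfσ hfD
  -- the radical of S is contained in T
  have hFbot : (⊥ : Ideal (Polynomial F)).jacobson = ⊥ := by
    refine Ideal.jacobson_bot_polynomial_of_jacobson_bot ?_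
    have : (⊥ : Ideal F).IsMaximal := Ideal.bot_isMaximal
    exact Ideal.jacobson_eq_self_of_isMaximal
  have hJker : (⊥ : Ideal S).jacobson ≤ RingHom.ker φ := by
    calc (⊥ : Ideal S).jacobson ≤ (Ideal.comap φ (⊥ : Ideal (Polynomial F))).jacobson :=
          Ideal.jacobson_mono bot_le
    _ = Ideal.comap φ (⊥ : Ideal (Polynomial F)).jacobson :=
          (Ideal.comap_jacobson_of_surjective hsurj).symm
    _ = RingHom.ker φ := by rw [hFbot]; rfl
  have hJT : ∀ s ∈ (⊥ : Ideal S).jacobson, s ∈ T := by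
    intro s hs
    exact (hker s).2 (RingHom.mem_ker.mp (hJker hs))
  have hTmul : ∀ t ∈ T, ∀ s : S, t * s ∈ T ∧ s * t ∈ T := by
    intro t ht s
    rw [hker] at ht
    constructor <;> rw [hker, map_mul, ht] <;> simp
  -- final set equality
  ext x
  simp only [SetLike.mem_coe, nuJacobsonIn, Set.mem_sUnion, Set.mem_setOf_eq]
  constructor
  · intro hx
    refine ⟨((⊥ : Ideal S).jacobson : Set S), ⟨?_, ?_, ?_, ?_, ?_, ?_⟩, hx⟩
    · intro s hs; exact hJT s hs
    · exact (⊥ : Ideal S).jacobson.zero_mem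
    · intro a ha b hb; exact Ideal.add_mem _ ha hb
    · intro a ha; exact neg_mem ha
    · intro a ha t ht
      exact ⟨Ideal.mul_mem_left _ t ha, DorrohAux.mul_mem_jacobson_bot_right t ha⟩
    · intro a ha
      obtain ⟨u, hu1, hu2⟩ := DorrohAux.two_sided_inv_of_mem_jacobson ha
      have hu2' : u + a * u = 1 := by rw [← hu2]; noncomm_ring
      have hy : u - 1 = -(a * u) := by rw [← hu2']; abel
      refine ⟨u - 1, ?_, ?_, ?_⟩
      · have ha0 : φ a = 0 := RingHom.mem_ker.mp (hJker ha)
        rw [hker, hy, map_neg, map_mul, ha0, zero_mul, neg_zero]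
      · have h : a + (u - 1) + a * (u - 1) = (1 + a) * u - 1 := by noncomm_ring
        rw [h, hu2, sub_self]
      · have h : a + (u - 1) + (u - 1) * a = u * (1 + a) - 1 := by noncomm_ring
        rw [h, hu1, sub_self]
  · rintro ⟨I, ⟨hIT, h0I, haddI, hnegI, hmulI, hquasiI⟩, hxI⟩
    rw [Ideal.mem_jacobson_iff]
    intro y
    have hxT : x ∈ T := hIT hxI
    have hxyT : x * y ∈ T := (hTmul x hxT y).1
    have hyxyT : y * (x * y) ∈ T := (hTmul (x * y) hxyT y).2
    have hz2I : x * (y * (x * y)) ∈ I := (hmulI x hxI _ hyxyT).2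
    set w : S := -(x * (y * (x * y))) with hwdef
    have hwI : w ∈ I := hnegI _ hz2I
    obtain ⟨v, hvT, hq1, hq2⟩ := hquasiI w hwI
    have e1 : (1 + w) * (1 + v) = 1 := by
      have h : (1 + w) * (1 + v) = 1 + (w + v + w * v) := by noncomm_ring
      rw [h, hq1, add_zero]
    have e2 : (1 + v) * (1 + w) = 1 := by
      have h : (1 + v) * (1 + w) = 1 + (w + v + v * w) := by noncomm_ring
      rw [h, hq2, add_zero]
    have h3 : (1 + x * y) * (1 - x * y) = 1 + w := by rw [hwdef]; noncomm_ring
    have h4 : (1 - x * y) * (1 + x * y) = 1 + w := by rw [hwdef]; noncomm_ring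
    have hr : (1 + x * y) * ((1 - x * y) * (1 + v)) = 1 := by
      rw [← mul_assoc, h3, e1]
    have hl : ((1 + v) * (1 - x * y)) * (1 + x * y) = 1 := by
      rw [mul_assoc, h4, e2]
    have hrl : (1 + v) * (1 - x * y) = (1 - x * y) * (1 + v) := by
      calc (1 + v) * (1 - x * y)
          = ((1 + v) * (1 - x * y)) * ((1 + x * y) * ((1 - x * y) * (1 + v))) := by
            rw [hr, mul_one]
        _ = (((1 + v) * (1 - x * y)) * (1 + x * y)) * ((1 - x * y) * (1 + v)) := by
            rw [← mul_assoc, ← mul_assoc]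
        _ = (1 - x * y) * (1 + v) := by rw [hl, one_mul]
    have hu2 : ((1 - x * y) * (1 + v)) * (1 + x * y) = 1 := by rw [← hrl, hl]
    obtain ⟨ee1, -⟩ := DorrohAux.swap_inv x y ((1 - x * y) * (1 + v)) hr hu2
    refine ⟨1 - y * ((1 - x * y) * (1 + v)) * x, ?_⟩
    rw [Ideal.mem_bot]
    have h : (1 - y * ((1 - x * y) * (1 + v)) * x) * y * x
          + (1 - y * ((1 - x * y) * (1 + v)) * x) - 1
        = (1 - y * ((1 - x * y) * (1 + v)) * x) * (1 + y * x) - 1 := by noncomm_ring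
    rw [h, ee1, sub_self]
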